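/- Combining the energy bound and the CSSP error bound: let A ∈ ℝ^{m×n}, 0 < r < rank(A), with column partition {V_i}_{i=1}^k, centroid dimensions d_i summing to r, ζ = max_i (1 + ‖C_i†‖₂‖V_i‖₂), and L* = max_i ⌈r/d_i⌉. If C ∈ ℝ^{m×r} is the partitioned-CSSP output (full column rank, with the blockwise error domination assumption), then ‖(I_m − CC†)A‖_F ≤ ζ · ( ‖A − A_r‖_F² + (1 − 1/L*)‖A_r‖_F² )^{1/2}. -/

import Mathlib

open Matrix BigOperators

/-- The Frobenius norm of a real matrix. -/
noncomputable def frobNorm {m n : Type*} [Fintype m] [Fintype n] (M : Matrix m n ℝ) : ℝ :=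
  Real.sqrt (∑ i, ∑ j, (M i j) ^ 2)

/-- The spectral (ℓ²-operator) norm of a real matrix. -/
noncomputable def specNorm {m n : Type*} [Fintype m] [Fintype n] [DecidableEq n]
    (M : Matrix m n ℝ) : ℝ :=
  ‖LinearMap.toContinuousLinearMap (Matrix.toEuclideanLin M)‖

/-- Moore–Penrose pseudoinverse of a full-column-rank matrix: `(MᵀM)⁻¹Mᵀ`. -/
noncomputable def pinvFR {m n : Type*} [Fintype m] [Fintype n] [DecidableEq n]
    (M : Matrix m n ℝ) : Matrix n m ℝ :=
  (Mᵀ * M)⁻¹ * Mᵀ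

/-- The Euclidean norm of a real vector. -/
noncomputable def euclNorm {n : Type*} [Fintype n] (x : n → ℝ) : ℝ :=
  Real.sqrt (∑ i, (x i) ^ 2)

set_option linter.unusedSectionVars false
set_option linter.deprecated false

namespace CSSPaux

variable {α β γ δ : Type*} [Fintype α] [Fintype β] [Fintype γ] [Fintype δ]

/-- squared Frobenius norm -/
def fsq (M : Matrix α β ℝ) : ℝ := ∑ i, ∑ j, (M i j) ^ 2

/-- squared euclidean norm of a vector -/
def vsq (v : α → ℝ) : ℝ := ∑ i, (v i) ^ 2

lemma vsq_nonneg (v : α → ℝ) : 0 ≤ vsq v :=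
  Finset.sum_nonneg fun _ _ => sq_nonneg _

lemma fsq_nonneg (M : Matrix α β ℝ) : 0 ≤ fsq M :=
  Finset.sum_nonneg fun _ _ => vsq_nonneg _

lemma frobNorm_eq_sqrt (M : Matrix α β ℝ) : frobNorm M = Real.sqrt (fsq M) := rfl

lemma frobNorm_nonneg (M : Matrix α β ℝ) : 0 ≤ frobNorm M := Real.sqrt_nonneg _

lemma frobNorm_sq (M : Matrix α β ℝ) : frobNorm M ^ 2 = fsq M :=
  Real.sq_sqrt (fsq_nonneg M)

lemma fsq_le_of_frob_le {M : Matrix α β ℝ} {N : Matrix γ β ℝ}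
    (h : frobNorm M ≤ frobNorm N) : fsq M ≤ fsq N := by
  rw [← frobNorm_sq, ← frobNorm_sq]
  exact pow_le_pow_left₀ (frobNorm_nonneg M) h 2

lemma frob_le_of_fsq_le {M : Matrix α β ℝ} {N : Matrix γ β ℝ}
    (h : fsq M ≤ fsq N) : frobNorm M ≤ frobNorm N :=
  Real.sqrt_le_sqrt h

lemma vsq_eq_dot (v : α → ℝ) : vsq v = v ⬝ᵥ v := by
  simp [vsq, dotProduct, sq]

lemma fsq_eq_trace (M : Matrix α β ℝ) : fsq M = (Mᵀ * M).trace := by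
  rw [Matrix.trace]
  simp only [Matrix.diag, Matrix.mul_apply, Matrix.transpose_apply]
  rw [fsq, Finset.sum_comm]
  simp [sq]

lemma fsq_eq_rows (M : Matrix α β ℝ) : fsq M = ∑ i, vsq (M i) := rfl

lemma vsq_mulVec_unitary [DecidableEq β] {U : Matrix α β ℝ} (hU : Uᵀ * U = 1) (z : β → ℝ) :
    vsq (U *ᵥ z) = vsq z := by
  rw [vsq_eq_dot, vsq_eq_dot]
  have h : U *ᵥ z = z ᵥ* Uᵀ := by rw [Matrix.vecMul_transpose]
  calc (U *ᵥ z) ⬝ᵥ (U *ᵥ z) = ((z ᵥ* Uᵀ) ᵥ* U) ⬝ᵥ z := by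
        rw [← h, Matrix.dotProduct_mulVec]
    _ = z ⬝ᵥ z := by rw [Matrix.vecMul_vecMul, hU, Matrix.vecMul_one]

lemma vsq_mulVec_le (M : Matrix α β ℝ) [DecidableEq β] (v : β → ℝ) :
    vsq (M *ᵥ v) ≤ specNorm M ^ 2 * vsq v := by
  have hx := (LinearMap.toContinuousLinearMap (Matrix.toEuclideanLin M)).le_opNorm
      ((WithLp.equiv 2 (β → ℝ)).symm v)
  rw [LinearMap.coe_toContinuousLinearMap'] at hx
  change ‖(WithLp.equiv 2 (α → ℝ)).symm (M *ᵥ v)‖ ≤ _ at hx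
  rw [EuclideanSpace.norm_eq, EuclideanSpace.norm_eq] at hx
  have e1 : Real.sqrt (∑ i, ‖(WithLp.equiv 2 (α → ℝ)).symm (M *ᵥ v) i‖ ^ 2)
      = Real.sqrt (vsq (M *ᵥ v)) := by
    congr 1; simp [vsq, Real.norm_eq_abs, sq_abs]
  have e2 : Real.sqrt (∑ i, ‖(WithLp.equiv 2 (β → ℝ)).symm v i‖ ^ 2)
      = Real.sqrt (vsq v) := by
    congr 1; simp [vsq, Real.norm_eq_abs, sq_abs]
  rw [e1, e2] at hx
  have h2 : vsq (M *ᵥ v) = Real.sqrt (vsq (M *ᵥ v)) ^ 2 := (Real.sq_sqrt (vsq_nonneg _)).symm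
  rw [h2]
  calc Real.sqrt (vsq (M *ᵥ v)) ^ 2 ≤ (specNorm M * Real.sqrt (vsq v)) ^ 2 := by
        apply pow_le_pow_left₀ (Real.sqrt_nonneg _) hx
    _ = specNorm M ^ 2 * vsq v := by
        rw [mul_pow, Real.sq_sqrt (vsq_nonneg _)]


/-- Pythagoras for a symmetric idempotent `P`. -/
lemma fsq_proj_add [DecidableEq α] {P : Matrix α α ℝ} (hsym : Pᵀ = P) (hidem : P * P = P)
    (X : Matrix α β ℝ) : fsq (P * X) + fsq ((1 - P) * X) = fsq X := by
  rw [fsq_eq_trace, fsq_eq_trace, fsq_eq_trace]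
  have h1 : (P * X)ᵀ * (P * X) = Xᵀ * (P * X) := by
    rw [Matrix.transpose_mul, hsym, Matrix.mul_assoc, ← Matrix.mul_assoc P P X, hidem]
  have h2 : ((1 - P) * X)ᵀ * ((1 - P) * X) = Xᵀ * ((1 - P) * X) := by
    have hs : (1 - P)ᵀ = 1 - P := by rw [Matrix.transpose_sub, Matrix.transpose_one, hsym]
    have hi : (1 - P) * (1 - P) = 1 - P := by
      simp [Matrix.sub_mul, Matrix.mul_sub, hidem]
    rw [Matrix.transpose_mul, hs, Matrix.mul_assoc, ← Matrix.mul_assoc (1-P) (1-P) X, hi]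
  rw [h1, h2, ← Matrix.trace_add, ← Matrix.mul_add]
  congr 1
  rw [← Matrix.add_mul]
  simp

lemma fsq_unitary [DecidableEq β] {U : Matrix α β ℝ} (hU : Uᵀ * U = 1) (M : Matrix β γ ℝ) :
    fsq (U * M) = fsq M := by
  rw [fsq_eq_trace, fsq_eq_trace]
  rw [Matrix.transpose_mul, Matrix.mul_assoc, ← Matrix.mul_assoc Uᵀ U M, hU, Matrix.one_mul]

lemma specNorm_nonneg (M : Matrix α β ℝ) [DecidableEq β] : 0 ≤ specNorm M := norm_nonneg _

/-- spectral bound for the transposed matrix -/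
lemma vsq_mulVec_transpose_le (M : Matrix α β ℝ) [DecidableEq α] [DecidableEq β] (v : α → ℝ) :
    vsq (Mᵀ *ᵥ v) ≤ specNorm M ^ 2 * vsq v := by
  set t := vsq (Mᵀ *ᵥ v) with ht
  have htnn : 0 ≤ t := vsq_nonneg _
  rcases eq_or_lt_of_le htnn with h0 | h0
  · rw [← h0]; exact mul_nonneg (sq_nonneg _) (vsq_nonneg v)
  have key : t = v ⬝ᵥ (M *ᵥ (Mᵀ *ᵥ v)) := by
    rw [ht, vsq_eq_dot, Matrix.dotProduct_mulVec v, ← Matrix.mulVec_transpose]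
  -- Cauchy-Schwarz
  have cs : t ^ 2 ≤ vsq v * vsq (M *ᵥ (Mᵀ *ᵥ v)) := by
    rw [key]
    have h := Finset.sum_mul_sq_le_sq_mul_sq Finset.univ v (M *ᵥ (Mᵀ *ᵥ v))
    simpa [vsq, dotProduct, sq] using h
  have h2 : vsq (M *ᵥ (Mᵀ *ᵥ v)) ≤ specNorm M ^ 2 * t := vsq_mulVec_le M _
  nlinarith [vsq_nonneg v, sq_nonneg (specNorm M)]

lemma fsq_mul_rows (M : Matrix α β ℝ) (N : Matrix β γ ℝ) :
    fsq (M * N) = ∑ i, vsq (Nᵀ *ᵥ (M i)) := by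
  unfold fsq vsq
  apply Finset.sum_congr rfl
  intro i _
  apply Finset.sum_congr rfl
  intro j _
  congr 1
  simp [Matrix.mul_apply, Matrix.mulVec, dotProduct, mul_comm]

lemma fsq_mul_le (M : Matrix α β ℝ) (N : Matrix β γ ℝ) [DecidableEq β] [DecidableEq γ] :
    fsq (M * N) ≤ fsq M * specNorm N ^ 2 := by
  rw [fsq_mul_rows, mul_comm (fsq M)]
  unfold fsq
  rw [Finset.mul_sum]
  apply Finset.sum_le_sum
  intro i _
  exact vsq_mulVec_transpose_le N (M i)

/-- For `Z * (Uᵀ * V)` with orthonormal `U`. -/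
lemma fsq_mul_utv_le (Z : Matrix α β ℝ) (U : Matrix γ β ℝ) (V : Matrix γ δ ℝ)
    [DecidableEq β] [DecidableEq γ] [DecidableEq δ] (hU : Uᵀ * U = 1) :
    fsq (Z * (Uᵀ * V)) ≤ specNorm V ^ 2 * fsq Z := by
  rw [fsq_mul_rows]
  have : specNorm V ^ 2 * fsq Z = ∑ i, specNorm V ^ 2 * vsq (Z i) := by
    unfold fsq vsq; rw [Finset.mul_sum]
  rw [this]
  apply Finset.sum_le_sum
  intro i _
  have h1 : (Uᵀ * V)ᵀ *ᵥ (Z i) = Vᵀ *ᵥ (U *ᵥ (Z i)) := by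
    rw [Matrix.transpose_mul, Matrix.transpose_transpose, Matrix.mulVec_mulVec]
  rw [h1]
  calc vsq (Vᵀ *ᵥ (U *ᵥ (Z i))) ≤ specNorm V ^ 2 * vsq (U *ᵥ (Z i)) :=
        vsq_mulVec_transpose_le V _
    _ = specNorm V ^ 2 * vsq (Z i) := by rw [vsq_mulVec_unitary hU]

lemma frob_eq_norm (M : Matrix α β ℝ) :
    frobNorm M = ‖(WithLp.equiv 2 (α × β → ℝ)).symm (fun p => M p.1 p.2)‖ := by
  rw [EuclideanSpace.norm_eq]
  unfold frobNorm
  congr 1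
  conv_rhs => rw [Fintype.sum_prod_type]
  simp [Real.norm_eq_abs, sq_abs]

lemma frob_triangle (X Y : Matrix α β ℝ) :
    frobNorm (X + Y) ≤ frobNorm X + frobNorm Y := by
  rw [frob_eq_norm, frob_eq_norm, frob_eq_norm]
  have h : (WithLp.equiv 2 (α × β → ℝ)).symm (fun p => (X + Y) p.1 p.2) =
      (WithLp.equiv 2 (α × β → ℝ)).symm (fun p => X p.1 p.2) +
      (WithLp.equiv 2 (α × β → ℝ)).symm (fun p => Y p.1 p.2) := rfl
  rw [h]
  exact norm_add_le _ _

lemma isUnit_of_rank_eq_card {n : Type*} [Fintype n] [DecidableEq n]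
    (M : Matrix n n ℝ) (h : M.rank = Fintype.card n) : IsUnit M := by
  rw [← Matrix.mulVec_surjective_iff_isUnit]
  have htop : LinearMap.range M.mulVecLin = ⊤ := by
    apply Submodule.eq_top_of_finrank_eq
    rw [Module.finrank_fintype_fun_eq_card]
    exact h
  have hs := LinearMap.range_eq_top.mp htop
  rwa [Matrix.coe_mulVecLin] at hs

lemma isUnit_gram [DecidableEq β] {C : Matrix α β ℝ} (h : C.rank = Fintype.card β) :
    IsUnit (Cᵀ * C) := by
  apply isUnit_of_rank_eq_card
  rw [Matrix.rank_transpose_mul_self]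
  exact h

lemma pinv_mul [DecidableEq β] {C : Matrix α β ℝ} (h : IsUnit (Cᵀ * C)) : pinvFR C * C = 1 := by
  unfold pinvFR
  rw [Matrix.mul_assoc]
  exact Matrix.nonsing_inv_mul _ (((Matrix.isUnit_iff_isUnit_det _).mp h))

lemma gram_inv_symm [DecidableEq β] {C : Matrix α β ℝ} : ((Cᵀ * C)⁻¹)ᵀ = (Cᵀ * C)⁻¹ := by
  rw [Matrix.transpose_nonsing_inv]
  congr 1
  rw [Matrix.transpose_mul, Matrix.transpose_transpose]

lemma proj_symm [DecidableEq β] {C : Matrix α β ℝ} : (C * pinvFR C)ᵀ = C * pinvFR C := by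
  unfold pinvFR
  rw [← Matrix.mul_assoc, Matrix.transpose_mul, Matrix.transpose_mul,
    Matrix.transpose_transpose, gram_inv_symm, Matrix.mul_assoc]

lemma proj_idem [DecidableEq β] {C : Matrix α β ℝ} (h : IsUnit (Cᵀ * C)) :
    (C * pinvFR C) * (C * pinvFR C) = C * pinvFR C := by
  rw [Matrix.mul_assoc C, ← Matrix.mul_assoc (pinvFR C), pinv_mul h, Matrix.one_mul]

lemma gram_inv_eq [DecidableEq β] {C : Matrix α β ℝ} (h : IsUnit (Cᵀ * C)) :
    pinvFR C * (pinvFR C)ᵀ = (Cᵀ * C)⁻¹ := by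
  unfold pinvFR
  rw [Matrix.transpose_mul, Matrix.transpose_transpose, gram_inv_symm,
    Matrix.mul_assoc, ← Matrix.mul_assoc Cᵀ C, ← Matrix.mul_assoc _ (Cᵀ * C)]
  rw [Matrix.nonsing_inv_mul _ (((Matrix.isUnit_iff_isUnit_det _).mp h)), Matrix.one_mul]

lemma fsq_res_U [DecidableEq α] [DecidableEq β] (U C : Matrix α β ℝ)
    (hU : Uᵀ * U = 1) (hC : IsUnit (Cᵀ * C)) :
    fsq ((1 - C * pinvFR C) * U) = (pinvFR C * ((1 - U * Uᵀ) * C)).trace := by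
  have hPs : (C * pinvFR C)ᵀ = C * pinvFR C := proj_symm
  have hPi : (C * pinvFR C) * (C * pinvFR C) = C * pinvFR C := proj_idem hC
  have h1Ps : (1 - C * pinvFR C)ᵀ = 1 - C * pinvFR C := by
    rw [Matrix.transpose_sub, Matrix.transpose_one, hPs]
  have h1Pi : (1 - C * pinvFR C) * (1 - C * pinvFR C) = 1 - C * pinvFR C := by
    simp [Matrix.sub_mul, Matrix.mul_sub, hPi]
  rw [fsq_eq_trace, Matrix.transpose_mul, h1Ps, Matrix.mul_assoc,
    ← Matrix.mul_assoc (1 - C * pinvFR C) (1 - C * pinvFR C) U, h1Pi]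
  -- trace (Uᵀ * ((1-P)*U)) = trace ((1-P)*(U*Uᵀ))
  rw [Matrix.trace_mul_comm, Matrix.mul_assoc]
  have hQC : (U * Uᵀ) * C = C - (1 - U * Uᵀ) * C := by
    rw [Matrix.sub_mul, Matrix.one_mul, sub_sub_cancel]
  have e3 : ((1 - C * pinvFR C) * (U * Uᵀ)).trace
      = (U * Uᵀ).trace - ((C * pinvFR C) * (U * Uᵀ)).trace := by
    rw [Matrix.sub_mul, Matrix.one_mul, Matrix.trace_sub]
  have e4 : (U * Uᵀ).trace = (1 : Matrix β β ℝ).trace := by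
    rw [Matrix.trace_mul_comm, hU]
  have e5 : ((C * pinvFR C) * (U * Uᵀ)).trace
      = (1 : Matrix β β ℝ).trace - (pinvFR C * ((1 - U * Uᵀ) * C)).trace := by
    rw [Matrix.mul_assoc, Matrix.trace_mul_comm, Matrix.mul_assoc, hQC,
      Matrix.mul_sub, pinv_mul hC, Matrix.trace_sub]
  rw [e3, e4, e5]
  ring

lemma trace_pinv_eq_fsq [DecidableEq α] [DecidableEq β] {C : Matrix α β ℝ}
    (hC : IsUnit (Cᵀ * C)) (B : Matrix α β ℝ) (hBtB : Bᵀ * B = Cᵀ * B) :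
    (pinvFR C * B).trace = fsq (B * pinvFR C) := by
  have e1 : fsq (B * pinvFR C) = (pinvFR C * (pinvFR C)ᵀ * (Bᵀ * B)).trace := by
    rw [fsq_eq_trace]
    calc ((B * pinvFR C)ᵀ * (B * pinvFR C)).trace
        = ((B * pinvFR C) * (B * pinvFR C)ᵀ).trace := Matrix.trace_mul_comm _ _
      _ = (B * (pinvFR C * ((pinvFR C)ᵀ * Bᵀ))).trace := by
          rw [Matrix.transpose_mul, Matrix.mul_assoc]
      _ = ((pinvFR C * ((pinvFR C)ᵀ * Bᵀ)) * B).trace := Matrix.trace_mul_comm _ _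
      _ = (pinvFR C * (pinvFR C)ᵀ * (Bᵀ * B)).trace := by
          rw [Matrix.mul_assoc, Matrix.mul_assoc, ← Matrix.mul_assoc (pinvFR C) ((pinvFR C)ᵀ)]
  rw [e1, gram_inv_eq hC, hBtB]
  have : pinvFR C * B = (Cᵀ * C)⁻¹ * (Cᵀ * B) := by
    unfold pinvFR; rw [Matrix.mul_assoc]
  rw [this]

lemma perblock [DecidableEq α] [DecidableEq β] [DecidableEq γ]
    (V : Matrix α γ ℝ) (U C : Matrix α β ℝ) (hU : Uᵀ * U = 1)
    (f : β → γ) (hf : Function.Injective f) (hCf : C = V.submatrix id f)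
    (hC : IsUnit (Cᵀ * C)) :
    frobNorm ((1 - C * pinvFR C) * V) ≤
      (1 + specNorm (pinvFR C) * specNorm V) * frobNorm ((1 - U * Uᵀ) * V) := by
  set Cp := pinvFR C with hCp
  set Q : Matrix α α ℝ := U * Uᵀ with hQ
  set P : Matrix α α ℝ := C * Cp with hP
  set E : Matrix α γ ℝ := (1 - Q) * V with hE
  set B : Matrix α β ℝ := (1 - Q) * C with hB
  have hQs : Qᵀ = Q := by rw [hQ, Matrix.transpose_mul, Matrix.transpose_transpose]
  have hQi : Q * Q = Q := by
    rw [hQ, Matrix.mul_assoc, ← Matrix.mul_assoc Uᵀ, hU, Matrix.one_mul]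
  have hPs : Pᵀ = P := proj_symm
  have hPi : P * P = P := proj_idem hC
  have h1Qs : (1 - Q)ᵀ = 1 - Q := by rw [Matrix.transpose_sub, Matrix.transpose_one, hQs]
  have h1Qi : (1 - Q) * (1 - Q) = 1 - Q := by
    simp [Matrix.sub_mul, Matrix.mul_sub, hQi]
  have h1Ps : (1 - P)ᵀ = 1 - P := by rw [Matrix.transpose_sub, Matrix.transpose_one, hPs]
  have h1Pi : (1 - P) * (1 - P) = 1 - P := by
    simp [Matrix.sub_mul, Matrix.mul_sub, hPi]
  -- decomposition
  have hsum : E + U * (Uᵀ * V) = V := by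
    rw [hE, Matrix.sub_mul, Matrix.one_mul, ← Matrix.mul_assoc, ← hQ]
    exact sub_add_cancel V (Q * V)
  have decomp : (1 - P) * V = (1 - P) * E + ((1 - P) * U) * (Uᵀ * V) := by
    rw [Matrix.mul_assoc (1 - P) U, ← Matrix.mul_add, hsum]
  have tri : frobNorm ((1 - P) * V) ≤
      frobNorm ((1 - P) * E) + frobNorm (((1 - P) * U) * (Uᵀ * V)) := by
    rw [decomp]; exact frob_triangle _ _
  -- term 1
  have term1 : frobNorm ((1 - P) * E) ≤ frobNorm E := by
    apply frob_le_of_fsq_le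
    have := fsq_proj_add hPs hPi E
    have h0 := fsq_nonneg (P * E)
    linarith
  -- fsq ((1-P)*U) = trace (Cp * B)
  have hZ : fsq ((1 - P) * U) = (Cp * B).trace := fsq_res_U U C hU hC
  have hBtB : Bᵀ * B = Cᵀ * B := by
    rw [hB, Matrix.transpose_mul, h1Qs, Matrix.mul_assoc,
      ← Matrix.mul_assoc (1-Q) (1-Q) C, h1Qi]
  have hTr : (Cp * B).trace = fsq (B * Cp) := trace_pinv_eq_fsq hC B hBtB
  -- fsq B ≤ fsq E
  have hBE : fsq B ≤ fsq E := by
    have hBsub : B = E.submatrix id f := by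
      rw [hB, hE, hCf]
      ext i j
      simp [Matrix.mul_apply]
    rw [hBsub]
    unfold fsq
    apply Finset.sum_le_sum
    intro i _
    have himg : ∑ c ∈ Finset.univ.image f, (E i c) ^ 2 = ∑ b, (E i (f b)) ^ 2 :=
      Finset.sum_image (fun x _ y _ h => hf h)
    rw [show ∑ j, E.submatrix id f i j ^ 2 = ∑ j, (E i (f j)) ^ 2 from rfl, ← himg]
    apply Finset.sum_le_sum_of_subset_of_nonneg (Finset.subset_univ _)
    intro c _ _
    exact sq_nonneg _
  -- term 2
  have term2 : frobNorm (((1 - P) * U) * (Uᵀ * V)) ≤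
      specNorm Cp * specNorm V * frobNorm E := by
    have t1 : fsq (((1 - P) * U) * (Uᵀ * V)) ≤ specNorm V ^ 2 * fsq ((1 - P) * U) :=
      fsq_mul_utv_le _ _ _ hU
    have t2 : fsq ((1 - P) * U) ≤ specNorm Cp ^ 2 * fsq E := by
      rw [hZ, hTr]
      calc fsq (B * Cp) ≤ fsq B * specNorm Cp ^ 2 := fsq_mul_le _ _
        _ ≤ fsq E * specNorm Cp ^ 2 := by
            apply mul_le_mul_of_nonneg_right hBE (sq_nonneg _)
        _ = specNorm Cp ^ 2 * fsq E := by ring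
    have t3 : fsq (((1 - P) * U) * (Uᵀ * V)) ≤
        (specNorm Cp * specNorm V) ^ 2 * fsq E := by
      calc fsq (((1 - P) * U) * (Uᵀ * V)) ≤ specNorm V ^ 2 * (specNorm Cp ^ 2 * fsq E) := by
            apply t1.trans
            exact mul_le_mul_of_nonneg_left t2 (sq_nonneg _)
        _ = (specNorm Cp * specNorm V) ^ 2 * fsq E := by ring
    rw [frobNorm_eq_sqrt, frobNorm_eq_sqrt]
    calc Real.sqrt (fsq (((1 - P) * U) * (Uᵀ * V)))
        ≤ Real.sqrt ((specNorm Cp * specNorm V) ^ 2 * fsq E) := Real.sqrt_le_sqrt t3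
      _ = specNorm Cp * specNorm V * Real.sqrt (fsq E) := by
          rw [Real.sqrt_mul (sq_nonneg _), Real.sqrt_sq
            (mul_nonneg (specNorm_nonneg _) (specNorm_nonneg _))]
  -- combine
  have final := tri.trans (add_le_add term1 term2)
  calc frobNorm ((1 - P) * V) ≤ frobNorm E + specNorm Cp * specNorm V * frobNorm E := final
    _ = (1 + specNorm Cp * specNorm V) * frobNorm ((1 - Q) * V) := by rw [← hE]; ring

lemma energy_partition {m r dd : ℕ} (hdd : 0 < dd) (hr1 : 1 ≤ r)
    {γ : Type*} [Fintype γ] (W : ℝ)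
    (Ur : Matrix (Fin m) (Fin r) ℝ) (hUr : Urᵀ * Ur = 1) (V : Matrix (Fin m) γ ℝ)
    (bound : ∀ (d' : ℕ), d' ≤ dd → ∀ P : Matrix (Fin m) (Fin d') ℝ, Pᵀ * P = 1 →
      fsq (P * Pᵀ * V) ≤ W) :
    fsq (Ur * Urᵀ * V) ≤ (((r + dd - 1) / dd : ℕ) : ℝ) * W := by
  set L := (r + dd - 1) / dd with hLdef
  have hW0 : 0 ≤ W := by
    have h := bound 0 (Nat.zero_le _) 0 (Subsingleton.elim _ _)
    exact le_trans (fsq_nonneg _) h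
  have step1 : fsq (Ur * Urᵀ * V) = fsq (Urᵀ * V) := by
    rw [Matrix.mul_assoc, fsq_unitary hUr]
  rw [step1, fsq_eq_rows]
  -- covering
  have hcov : ∀ c : Fin r, c.1 / dd ∈ Finset.range L := by
    intro c
    rw [Finset.mem_range, hLdef]
    have h1 : c.1 ≤ r - 1 := Nat.le_sub_one_of_lt c.2
    have h2 : c.1 / dd ≤ (r - 1) / dd := Nat.div_le_div_right h1
    have h3 : (r + dd - 1) / dd = (r - 1) / dd + 1 := by
      have : r + dd - 1 = (r - 1) + dd := by omega
      rw [this, Nat.add_div_right _ hdd]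
    omega
  rw [← Finset.sum_fiberwise_of_maps_to (g := fun c : Fin r => c.1 / dd)
    (fun c _ => hcov c) (fun c => vsq ((Urᵀ * V) c))]
  -- each fiber contributes ≤ W
  have fiber : ∀ g ∈ Finset.range L,
      ∑ c ∈ Finset.univ.filter (fun c : Fin r => c.1 / dd = g), vsq ((Urᵀ * V) c) ≤ W := by
    intro g _
    set G := Finset.univ.filter (fun c : Fin r => c.1 / dd = g) with hG
    have hcard : G.card ≤ dd := by
      have hinj : Set.InjOn (fun c : Fin r => (⟨c.1 % dd, Nat.mod_lt _ hdd⟩ : Fin dd)) ↑G := by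
        intro c1 h1 c2 h2 he
        rw [hG] at h1 h2
        have h1' : c1.1 / dd = g := (Finset.mem_filter.mp (Finset.mem_coe.mp h1)).2
        have h2' : c2.1 / dd = g := (Finset.mem_filter.mp (Finset.mem_coe.mp h2)).2
        have hv : c1.1 % dd = c2.1 % dd := Fin.mk.inj_iff.mp he
        have hq : c1.1 / dd = c2.1 / dd := by rw [h1', h2']
        have e1 := Nat.div_add_mod c1.1 dd
        have e2 := Nat.div_add_mod c2.1 dd
        apply Fin.ext
        calc c1.1 = dd * (c1.1 / dd) + c1.1 % dd := e1.symm
          _ = dd * (c2.1 / dd) + c2.1 % dd := by rw [hq, hv]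
          _ = c2.1 := e2
      have := Finset.card_le_card_of_injOn _ (fun c _ => Finset.mem_univ _) hinj
      simpa using this
    set e := G.orderEmbOfFin rfl with he
    set P := Ur.submatrix id (fun a => e a) with hPdef
    have hP : Pᵀ * P = 1 := by
      ext a b
      have key : (Pᵀ * P) a b = (Urᵀ * Ur) (e a) (e b) := by
        simp [Matrix.mul_apply, hPdef]
      rw [key, hUr]
      simp only [Matrix.one_apply]
      by_cases hab : a = b
      · simp [hab]
      · have : ¬ (e a = e b) := fun hh => hab (e.injective hh)
        simp [hab, this]
    have hb := bound G.card hcard P hP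
    have e1 : fsq (P * Pᵀ * V) = fsq (Pᵀ * V) := by
      rw [Matrix.mul_assoc, fsq_unitary hP]
    have e2 : fsq (Pᵀ * V) = ∑ a : Fin G.card, vsq ((Urᵀ * V) (e a)) := by
      rw [fsq_eq_rows]
      apply Finset.sum_congr rfl
      intro a _
      unfold vsq
      apply Finset.sum_congr rfl
      intro j _
      rfl
    have e3 : ∑ c ∈ G, vsq ((Urᵀ * V) c) = ∑ a : Fin G.card, vsq ((Urᵀ * V) (e a)) := by
      refine (Finset.sum_bij (fun (a : Fin G.card) _ => e a) ?_ ?_ ?_ ?_).symm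
      · intro a _; exact Finset.orderEmbOfFin_mem G rfl a
      · intro a _ b _ hh; exact e.injective hh
      · intro c hc
        have : c ∈ Set.range e := by
          rw [he, Finset.range_orderEmbOfFin]
          exact hc
        obtain ⟨a, ha⟩ := this
        exact ⟨a, Finset.mem_univ _, ha⟩
      · intro a _; rfl
    rw [e3, ← e2, ← e1]
    exact hb
  calc ∑ g ∈ Finset.range L, ∑ c ∈ Finset.univ.filter (fun c : Fin r => c.1 / dd = g),
        vsq ((Urᵀ * V) c) ≤ ∑ _g ∈ Finset.range L, W := Finset.sum_le_sum fiber
    _ = (L : ℝ) * W := by rw [Finset.sum_const, Finset.card_range, nsmul_eq_mul]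

lemma fsq_sigma {k : ℕ} {nn : Fin k → ℕ} (M : Matrix α ((i : Fin k) × Fin (nn i)) ℝ) :
    fsq M = ∑ i, fsq (M.submatrix id (Sigma.mk i)) := by
  unfold fsq
  have h1 : (∑ x : α, ∑ y : (i : Fin k) × Fin (nn i), M x y ^ 2)
      = ∑ x : α, ∑ i : Fin k, ∑ j : Fin (nn i), M x ⟨i, j⟩ ^ 2 := by
    apply Finset.sum_congr rfl
    intro x _
    rw [← Finset.univ_sigma_univ, Finset.sum_sigma]
  rw [h1, Finset.sum_comm]
  rfl

lemma mul_submatrix_col {δ : Type*} (X : Matrix α β ℝ) (M : Matrix β γ ℝ) (g : δ → γ) :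
    (X * M).submatrix id g = X * (M.submatrix id g) := by
  ext i j
  simp [Matrix.mul_apply]

end CSSPaux

open CSSPaux in
/-- combined bound: `‖(I - CC†)A‖_F ≤ ζ (‖A - A_r‖_F² + (1 - 1/L*)‖A_r‖_F²)^{1/2}`. -/
theorem partitioned_cssp_combined_bound {m k : ℕ} (hk : 0 < k) (nn d : Fin k → ℕ)
    (hd : ∀ i, 0 < d i)
    (A : Matrix (Fin m) ((i : Fin k) × Fin (nn i)) ℝ)
    (r : ℕ) (hr : r = ∑ i, d i) (hrank : r < A.rank)
    (C : Matrix (Fin m) ((i : Fin k) × Fin (d i)) ℝ)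
    (hrankC : C.rank = Fintype.card ((i : Fin k) × Fin (d i)))
    (hsel : ∀ i, ∃ f : Fin (d i) → Fin (nn i), Function.Injective f ∧
      C.submatrix id (Sigma.mk i) = (A.submatrix id (Sigma.mk i)).submatrix id f)
    (hrankCi : ∀ i, (C.submatrix id (Sigma.mk i)).rank = d i)
    (Uh : (i : Fin k) → Matrix (Fin m) (Fin (d i)) ℝ)
    (hUh : ∀ i, (Uh i)ᵀ * Uh i = 1)
    (hmax : ∀ i (d' : ℕ), d' ≤ d i → ∀ P : Matrix (Fin m) (Fin d') ℝ, Pᵀ * P = 1 →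
      frobNorm (P * Pᵀ * A.submatrix id (Sigma.mk i)) ≤
        frobNorm (Uh i * (Uh i)ᵀ * A.submatrix id (Sigma.mk i)))
    (hEY : ∀ i, ∀ P : Matrix (Fin m) (Fin (d i)) ℝ, Pᵀ * P = 1 →
      frobNorm ((1 - Uh i * (Uh i)ᵀ) * A.submatrix id (Sigma.mk i)) ≤
        frobNorm ((1 - P * Pᵀ) * A.submatrix id (Sigma.mk i)))
    (hdom : ∀ i, frobNorm ((1 - C * pinvFR C) * A.submatrix id (Sigma.mk i)) ≤
      frobNorm ((1 - C.submatrix id (Sigma.mk i) * pinvFR (C.submatrix id (Sigma.mk i))) *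
        A.submatrix id (Sigma.mk i)))
    (Ur : Matrix (Fin m) (Fin r) ℝ) (hUr : Urᵀ * Ur = 1)
    (hEYr : ∀ P : Matrix (Fin m) (Fin r) ℝ, Pᵀ * P = 1 →
      frobNorm (A - Ur * Urᵀ * A) ≤ frobNorm (A - P * Pᵀ * A))
    (Ar : Matrix (Fin m) ((i : Fin k) × Fin (nn i)) ℝ) (hAr : Ar = Ur * Urᵀ * A)
    (Lstar : ℕ) (hL : Lstar = Finset.univ.sup fun i => (r + d i - 1) / d i)
    (ζ : ℝ) (hζ : ζ = Finset.univ.sup' (Finset.univ_nonempty_iff.mpr ⟨⟨0, hk⟩⟩)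
      (fun i => 1 + specNorm (pinvFR (C.submatrix id (Sigma.mk i))) *
        specNorm (A.submatrix id (Sigma.mk i)))) :
    frobNorm ((1 - C * pinvFR C) * A) ≤
      ζ * Real.sqrt (frobNorm (A - Ar) ^ 2 + (1 - 1 / (Lstar : ℝ)) * frobNorm Ar ^ 2) := by
  have hr1 : 1 ≤ r := by
    rw [hr]
    exact Finset.sum_pos (fun i _ => hd i) ⟨⟨0, hk⟩, Finset.mem_univ _⟩
  have hLst : ∀ i, ((r + d i - 1) / (d i) : ℕ) ≤ Lstar := by
    intro i
    rw [hL]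
    exact Finset.le_sup (f := fun i => (r + d i - 1) / d i) (Finset.mem_univ i)
  have hL1 : 1 ≤ Lstar := by
    refine le_trans ?_ (hLst ⟨0, hk⟩)
    rw [Nat.one_le_div_iff (hd _)]
    have := hd ⟨0, hk⟩
    omega
  have hζi : ∀ i, 1 + specNorm (pinvFR (C.submatrix id (Sigma.mk i))) *
      specNorm (A.submatrix id (Sigma.mk i)) ≤ ζ := by
    intro i
    rw [hζ]
    exact Finset.le_sup' (f := fun i => 1 + specNorm (pinvFR (C.submatrix id (Sigma.mk i))) *
      specNorm (A.submatrix id (Sigma.mk i))) (Finset.mem_univ i)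
  have hζ1 : (1 : ℝ) ≤ ζ := by
    refine le_trans ?_ (hζi ⟨0, hk⟩)
    have h1 := specNorm_nonneg (pinvFR (C.submatrix id (Sigma.mk ⟨0, hk⟩)))
    have h2 := specNorm_nonneg (A.submatrix id (Sigma.mk ⟨0, hk⟩))
    nlinarith
  have hζ0 : (0 : ℝ) ≤ ζ := le_trans zero_le_one hζ1
  have hIsU : ∀ i, IsUnit ((C.submatrix id (Sigma.mk i))ᵀ * C.submatrix id (Sigma.mk i)) :=
    fun i => isUnit_gram (by rw [hrankCi i, Fintype.card_fin])
  -- per-block bound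
  have hpb : ∀ i, frobNorm ((1 - C * pinvFR C) * A.submatrix id (Sigma.mk i)) ≤
      ζ * frobNorm ((1 - Uh i * (Uh i)ᵀ) * A.submatrix id (Sigma.mk i)) := by
    intro i
    obtain ⟨f, hf, hCf⟩ := hsel i
    refine (hdom i).trans ?_
    refine (perblock _ (Uh i) _ (hUh i) f hf hCf (hIsU i)).trans ?_
    exact mul_le_mul_of_nonneg_right (hζi i) (frobNorm_nonneg _)
  have hpb2 : ∀ i, fsq ((1 - C * pinvFR C) * A.submatrix id (Sigma.mk i)) ≤
      ζ ^ 2 * fsq ((1 - Uh i * (Uh i)ᵀ) * A.submatrix id (Sigma.mk i)) := by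
    intro i
    have h := pow_le_pow_left₀ (frobNorm_nonneg _) (hpb i) 2
    rw [frobNorm_sq, mul_pow, frobNorm_sq] at h
    exact h
  -- per-block Pythagoras
  have hQs : ∀ i, (Uh i * (Uh i)ᵀ)ᵀ = Uh i * (Uh i)ᵀ := fun i => by
    rw [Matrix.transpose_mul, Matrix.transpose_transpose]
  have hQi : ∀ i, (Uh i * (Uh i)ᵀ) * (Uh i * (Uh i)ᵀ) = Uh i * (Uh i)ᵀ := fun i => by
    rw [Matrix.mul_assoc, ← Matrix.mul_assoc (Uh i)ᵀ, hUh i, Matrix.one_mul]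
  have hpyth : ∀ i, fsq ((Uh i * (Uh i)ᵀ) * A.submatrix id (Sigma.mk i)) +
      fsq ((1 - Uh i * (Uh i)ᵀ) * A.submatrix id (Sigma.mk i)) =
      fsq (A.submatrix id (Sigma.mk i)) := fun i => fsq_proj_add (hQs i) (hQi i) _
  -- energy bound per block
  have hen : ∀ i, fsq (Ur * Urᵀ * A.submatrix id (Sigma.mk i)) ≤
      (Lstar : ℝ) * fsq (Uh i * (Uh i)ᵀ * A.submatrix id (Sigma.mk i)) := by
    intro i
    have hb : ∀ (d' : ℕ), d' ≤ d i → ∀ P : Matrix (Fin m) (Fin d') ℝ, Pᵀ * P = 1 →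
        fsq (P * Pᵀ * A.submatrix id (Sigma.mk i)) ≤
          fsq (Uh i * (Uh i)ᵀ * A.submatrix id (Sigma.mk i)) :=
      fun d' hd' P hP => fsq_le_of_frob_le (hmax i d' hd' P hP)
    refine (energy_partition (hd i) hr1 _ Ur hUr _ hb).trans ?_
    apply mul_le_mul_of_nonneg_right _ (fsq_nonneg _)
    exact_mod_cast hLst i
  -- block decompositions
  have hsplitL : fsq ((1 - C * pinvFR C) * A) =
      ∑ i, fsq ((1 - C * pinvFR C) * A.submatrix id (Sigma.mk i)) := by
    rw [fsq_sigma ((1 - C * pinvFR C) * A)]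
    exact Finset.sum_congr rfl fun i _ => by rw [mul_submatrix_col]
  have hsplitA : fsq A = ∑ i, fsq (A.submatrix id (Sigma.mk i)) := fsq_sigma A
  have hsplitAr : fsq Ar = ∑ i, fsq (Ur * Urᵀ * A.submatrix id (Sigma.mk i)) := by
    rw [hAr, fsq_sigma (Ur * Urᵀ * A)]
    exact Finset.sum_congr rfl fun i _ => by rw [mul_submatrix_col]
  -- global Pythagoras
  have hpyA : fsq Ar + fsq (A - Ar) = fsq A := by
    have hs : (Ur * Urᵀ)ᵀ = Ur * Urᵀ := by
      rw [Matrix.transpose_mul, Matrix.transpose_transpose]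
    have hi : (Ur * Urᵀ) * (Ur * Urᵀ) = Ur * Urᵀ := by
      rw [Matrix.mul_assoc, ← Matrix.mul_assoc Urᵀ, hUr, Matrix.one_mul]
    have h := fsq_proj_add hs hi A
    have h1 : (Ur * Urᵀ) * A = Ar := by rw [hAr, Matrix.mul_assoc]
    have h2 : (1 - Ur * Urᵀ) * A = A - Ar := by
      rw [Matrix.sub_mul, Matrix.one_mul, hAr, Matrix.mul_assoc]
    rw [h1, h2] at h
    exact h
  set S := ∑ i, fsq (Uh i * (Uh i)ᵀ * A.submatrix id (Sigma.mk i)) with hSdef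
  have hS0 : 0 ≤ S := Finset.sum_nonneg fun i _ => fsq_nonneg _
  have hArS : fsq Ar ≤ (Lstar : ℝ) * S := by
    rw [hsplitAr, hSdef, Finset.mul_sum]
    exact Finset.sum_le_sum fun i _ => hen i
  have hmain : fsq ((1 - C * pinvFR C) * A) ≤ ζ ^ 2 * (fsq A - S) := by
    rw [hsplitL]
    calc ∑ i, fsq ((1 - C * pinvFR C) * A.submatrix id (Sigma.mk i))
        ≤ ∑ i, ζ ^ 2 * fsq ((1 - Uh i * (Uh i)ᵀ) * A.submatrix id (Sigma.mk i)) :=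
          Finset.sum_le_sum fun i _ => hpb2 i
      _ = ζ ^ 2 * ∑ i, fsq ((1 - Uh i * (Uh i)ᵀ) * A.submatrix id (Sigma.mk i)) := by
          rw [Finset.mul_sum]
      _ = ζ ^ 2 * (fsq A - S) := by
          congr 1
          rw [hsplitA, hSdef, ← Finset.sum_sub_distrib]
          exact Finset.sum_congr rfl fun i _ => by
            have := hpyth i
            linarith
  have hls : (0 : ℝ) < (Lstar : ℝ) := by exact_mod_cast hL1
  have hSlow : fsq Ar / (Lstar : ℝ) ≤ S := by
    rw [div_le_iff₀ hls]
    calc fsq Ar ≤ (Lstar : ℝ) * S := hArS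
      _ = S * (Lstar : ℝ) := by ring
  have hX : fsq A - S ≤ fsq (A - Ar) + (1 - 1 / (Lstar : ℝ)) * fsq Ar := by
    have expand : fsq (A - Ar) + (1 - 1 / (Lstar : ℝ)) * fsq Ar =
        fsq A - fsq Ar / (Lstar : ℝ) := by
      rw [← hpyA]; ring
    linarith
  rw [frobNorm_eq_sqrt, frobNorm_sq, frobNorm_sq]
  have hZX : fsq ((1 - C * pinvFR C) * A) ≤
      ζ ^ 2 * (fsq (A - Ar) + (1 - 1 / (Lstar : ℝ)) * fsq Ar) :=
    hmain.trans (mul_le_mul_of_nonneg_left hX (sq_nonneg ζ))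
  calc Real.sqrt (fsq ((1 - C * pinvFR C) * A))
      ≤ Real.sqrt (ζ ^ 2 * (fsq (A - Ar) + (1 - 1 / (Lstar : ℝ)) * fsq Ar)) :=
        Real.sqrt_le_sqrt hZX
    _ = ζ * Real.sqrt (fsq (A - Ar) + (1 - 1 / (Lstar : ℝ)) * fsq Ar) := by
        rw [Real.sqrt_mul (sq_nonneg ζ), Real.sqrt_sq hζ0]
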